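/- Let W ∈ ℝ^{n×n}, m ∈ ℝ^n with m > 0, and τ > 0. If ρ(|W|) < 1, then for every c ∈ ℝ^n the equation x = [W x + c]_0^m has a unique solution x*(c), and the linear-threshold dynamics τ ẋ = −x + [W x + c]_0^m is globally exponentially stable to x*(c). -/

import Mathlib

open Matrix

noncomputable section

/-- componentwise clamping of `x` to the box `[0, m]` -/
def clamp {ι : Type*} (m x : ι → ℝ) : ι → ℝ := fun k => min (max (x k) 0) (m k)

/-- entrywise absolute value of a matrix -/
def eAbs {α β : Type*} (A : Matrix α β ℝ) : Matrix α β ℝ := Matrix.of fun k l => |A k l|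

/-- spectral radius of a real matrix: the largest modulus of its (complex) spectrum -/
def specRad {ι : Type*} [Fintype ι] [DecidableEq ι] (A : Matrix ι ι ℝ) : ℝ :=
  sSup ((fun z : ℂ => ‖z‖) '' spectrum ℂ (A.map (fun a : ℝ => (a : ℂ))))

section Aux

open scoped NNReal ENNReal

attribute [local instance] Matrix.linftyOpNormedRing Matrix.linftyOpNormedAlgebra

private lemma spec_decay {n : ℕ} (A : Matrix (Fin n) (Fin n) ℝ) (hρ : specRad A < 1) :
    ∃ θ : ℝ, 0 < θ ∧ θ < 1 ∧ ∃ C : ℝ, 1 ≤ C ∧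
      ∀ k : ℕ, ‖(A.map (fun a : ℝ => (a : ℂ))) ^ k‖ ≤ C * θ ^ k := by
  set B := A.map (fun a : ℝ => (a : ℂ)) with hB
  have hsr : spectralRadius ℂ B < 1 := by
    have hbdd : BddAbove ((fun z : ℂ => ‖z‖) '' spectrum ℂ B) :=
      ((spectrum.isCompact B).image continuous_norm).bddAbove
    have h1 : spectralRadius ℂ B ≤ ENNReal.ofReal (specRad A) := by
      rw [spectralRadius]
      refine iSup₂_le fun z hz => ?_
      have hle : ‖z‖ ≤ specRad A :=
        le_csSup hbdd (Set.mem_image_of_mem _ hz)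
      have h2 : ((‖z‖₊ : ℝ≥0) : ℝ≥0∞) = ENNReal.ofReal ‖z‖ := by
        exact (ofReal_norm z).symm
      rw [h2]
      exact ENNReal.ofReal_le_ofReal hle
    refine lt_of_le_of_lt h1 ?_
    rw [← ENNReal.ofReal_one]
    exact (ENNReal.ofReal_lt_ofReal_iff (by norm_num)).mpr hρ
  obtain ⟨te, hte1, hte2⟩ := exists_between hsr
  have hteT : te ≠ ⊤ := ne_top_of_lt hte2
  set θ : ℝ := max te.toReal (1/2) with hθ
  have hθ0 : 0 < θ := lt_of_lt_of_le (by norm_num) (le_max_right _ _)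
  have hθ1 : θ < 1 := by
    have h1 : te.toReal < 1 := by
      have := ENNReal.toReal_lt_toReal hteT (by simp) |>.mpr hte2
      simpa using this
    simp only [hθ, sup_lt_iff]
    exact ⟨h1, by norm_num⟩
  have hlt : spectralRadius ℂ B < ENNReal.ofReal θ := by
    refine lt_of_lt_of_le hte1 ?_
    rw [← ENNReal.ofReal_toReal hteT]
    exact ENNReal.ofReal_le_ofReal (le_max_left _ _)
  have hG := spectrum.pow_norm_pow_one_div_tendsto_nhds_spectralRadius B
  have hev : ∀ᶠ k : ℕ in Filter.atTop,
      ENNReal.ofReal (‖B ^ k‖ ^ (1 / (k:ℝ))) < ENNReal.ofReal θ :=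
    hG.eventually_lt_const hlt
  obtain ⟨N, hN⟩ := hev.exists_forall_of_atTop
  have hkey : ∀ k : ℕ, N ≤ k → 1 ≤ k → ‖B ^ k‖ ≤ θ ^ k := by
    intro k hk hk1
    have h1 : ‖B ^ k‖ ^ (1 / (k:ℝ)) ≤ θ := by
      have := hN k hk
      rw [ENNReal.ofReal_lt_ofReal_iff hθ0] at this
      exact this.le
    have h2 : (‖B ^ k‖ ^ (1 / (k:ℝ))) ^ (k:ℕ) ≤ θ ^ k :=
      pow_le_pow_left₀ (Real.rpow_nonneg (norm_nonneg _) _) h1 k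
    calc ‖B ^ k‖ = (‖B ^ k‖ ^ (1 / (k:ℝ))) ^ (k:ℕ) := by
          rw [← Real.rpow_natCast (‖B ^ k‖ ^ (1 / (k:ℝ))) k, ← Real.rpow_mul (norm_nonneg _),
            one_div, inv_mul_cancel₀ (by exact_mod_cast Nat.one_le_iff_ne_zero.mp hk1 : (k:ℝ) ≠ 0),
            Real.rpow_one]
      _ ≤ θ ^ k := h2
  set C : ℝ := 1 + ∑ j ∈ Finset.range (N + 1), ‖B ^ j‖ / θ ^ j with hC
  have hC1 : 1 ≤ C := by
    have : 0 ≤ ∑ j ∈ Finset.range (N + 1), ‖B ^ j‖ / θ ^ j :=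
      Finset.sum_nonneg fun j _ => div_nonneg (norm_nonneg _) (pow_nonneg hθ0.le _)
    simp [hC]; linarith
  refine ⟨θ, hθ0, hθ1, C, hC1, fun k => ?_⟩
  rcases le_or_gt k N with hkN | hkN
  · have hmem : k ∈ Finset.range (N + 1) := Finset.mem_range.mpr (by omega)
    have h1 : ‖B ^ k‖ / θ ^ k ≤ C := by
      have := Finset.single_le_sum
        (f := fun j => ‖B ^ j‖ / θ ^ j)
        (fun j _ => div_nonneg (norm_nonneg _) (pow_nonneg hθ0.le _)) hmem
      simp only [hC]; linarith
    calc ‖B ^ k‖ = ‖B ^ k‖ / θ ^ k * θ ^ k := by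
          field_simp
      _ ≤ C * θ ^ k := by
          exact mul_le_mul_of_nonneg_right h1 (pow_nonneg hθ0.le _)
  · have h1 := hkey k (by omega) (by omega)
    have : θ ^ k ≤ C * θ ^ k := le_mul_of_one_le_left (pow_nonneg hθ0.le _) hC1
    linarith

private lemma pow_entry_nonneg {n : ℕ} {A : Matrix (Fin n) (Fin n) ℝ} (hA : ∀ i j, 0 ≤ A i j) :
    ∀ (k : ℕ) (i j : Fin n), 0 ≤ (A ^ k) i j := by
  intro k
  induction k with
  | zero => intro i j; by_cases h : i = j <;> simp [pow_zero, Matrix.one_apply, h]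
  | succ k ih =>
    intro i j
    rw [pow_succ, Matrix.mul_apply]
    exact Finset.sum_nonneg fun l _ => mul_nonneg (ih i l) (hA l j)

private lemma map_pow_entry {n : ℕ} (A : Matrix (Fin n) (Fin n) ℝ) (k : ℕ) (i j : Fin n) :
    ((A.map (fun a : ℝ => (a : ℂ))) ^ k) i j = (((A ^ k) i j : ℝ) : ℂ) := by
  have h : A.map (fun a : ℝ => (a : ℂ)) = Complex.ofRealHom.mapMatrix A := rfl
  rw [h, ← map_pow]
  rfl

private lemma rowsum_le_norm {n : ℕ} (M : Matrix (Fin n) (Fin n) ℂ) (i : Fin n) :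
    ∑ j, ‖M i j‖ ≤ ‖M‖ := by
  rw [Matrix.linfty_opNorm_def]
  have h : (∑ j, ‖M i j‖₊) ≤ Finset.univ.sup fun i => ∑ j, ‖M i j‖₊ :=
    Finset.le_sup (f := fun i => ∑ j, ‖M i j‖₊) (Finset.mem_univ i)
  calc ∑ j, ‖M i j‖ = ((∑ j, ‖M i j‖₊ : ℝ≥0) : ℝ) := by push_cast; rfl
    _ ≤ _ := by exact_mod_cast h

/-- existence of a weight vector -/
private lemma exists_weight {n : ℕ} (A : Matrix (Fin n) (Fin n) ℝ) (hA : ∀ i j, 0 ≤ A i j)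
    (hρ : specRad A < 1) :
    ∃ θ : ℝ, 0 < θ ∧ θ < 1 ∧ ∃ v : Fin n → ℝ, ∃ M : ℝ,
      (∀ i, 1 ≤ v i) ∧ (∀ i, v i ≤ M) ∧ (∀ i, (A *ᵥ v) i ≤ θ * v i) := by
  obtain ⟨θ0, hθ00, hθ01, C, hC1, hpow⟩ := spec_decay A hρ
  set θ : ℝ := (θ0 + 1) / 2 with hθ
  have hθ0 : 0 < θ := by rw [hθ]; linarith
  have hθ1 : θ < 1 := by rw [hθ]; linarith
  have hθ0θ : θ0 < θ := by rw [hθ]; linarith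
  set r : ℝ := θ0 / θ with hr
  have hr0 : 0 ≤ r := div_nonneg hθ00.le hθ0.le
  have hr1 : r < 1 := (div_lt_one hθ0).mpr hθ0θ
  set u : ℕ → Fin n → ℝ := fun k i => θ⁻¹ ^ k * ((A ^ k *ᵥ fun _ => (1:ℝ)) i) with hu
  have hAk1 : ∀ (k : ℕ) (i : Fin n), (A ^ k *ᵥ fun _ => (1:ℝ)) i = ∑ j, (A ^ k) i j := by
    intro k i; simp [Matrix.mulVec, dotProduct]
  have hu_nonneg : ∀ k i, 0 ≤ u k i := by
    intro k i
    refine mul_nonneg (pow_nonneg (inv_nonneg.mpr hθ0.le) _) ?_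
    rw [hAk1]
    exact Finset.sum_nonneg fun j _ => pow_entry_nonneg hA k i j
  have hu_le : ∀ k i, u k i ≤ C * r ^ k := by
    intro k i
    have h1 : (A ^ k *ᵥ fun _ => (1:ℝ)) i ≤ C * θ0 ^ k := by
      rw [hAk1]
      have h2 : ∑ j, (A ^ k) i j ≤ ∑ j, ‖((A.map (fun a : ℝ => (a : ℂ))) ^ k) i j‖ := by
        refine Finset.sum_le_sum fun j _ => ?_
        rw [map_pow_entry, Complex.norm_real, Real.norm_eq_abs]
        exact le_abs_self _
      exact h2.trans ((rowsum_le_norm _ i).trans (hpow k))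
    have : u k i ≤ θ⁻¹ ^ k * (C * θ0 ^ k) := by
      refine mul_le_mul_of_nonneg_left h1 (pow_nonneg (inv_nonneg.mpr hθ0.le) _)
    refine this.trans (le_of_eq ?_)
    rw [hr, div_pow, div_eq_mul_inv, ← inv_pow]
    ring
  have hsum : ∀ i, Summable fun k => u k i := by
    intro i
    refine Summable.of_nonneg_of_le (fun k => hu_nonneg k i) (fun k => hu_le k i) ?_
    exact (summable_geometric_of_lt_one hr0 hr1).mul_left C
  set v : Fin n → ℝ := fun i => ∑' k, u k i with hv
  have hv1 : ∀ i, 1 ≤ v i := by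
    intro i
    have h0 : u 0 i = 1 := by simp [hu, hAk1, Matrix.one_apply]
    have := Summable.le_tsum (hsum i) 0 (fun j _ => hu_nonneg j i)
    rw [h0] at this; exact this
  have hvM : ∀ i, v i ≤ C * (1 - r)⁻¹ := by
    intro i
    have h1 : v i ≤ ∑' k, C * r ^ k :=
      Summable.tsum_le_tsum (fun k => hu_le k i) (hsum i)
        ((summable_geometric_of_lt_one hr0 hr1).mul_left C)
    rw [tsum_mul_left, tsum_geometric_of_lt_one hr0 hr1] at h1
    exact h1
  refine ⟨θ, hθ0, hθ1, v, C * (1 - r)⁻¹, hv1, hvM, fun i => ?_⟩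
  have hshift : ∀ k (i : Fin n), ∑ j, A i j * u k j = θ * u (k+1) i := by
    intro k i
    have h1 : ∑ j, A i j * u k j = θ⁻¹ ^ k * ∑ j, A i j * ((A ^ k *ᵥ fun _ => (1:ℝ)) j) := by
      rw [Finset.mul_sum]; congr 1; ext j; rw [hu]; ring
    have h2 : ∑ j, A i j * ((A ^ k *ᵥ fun _ => (1:ℝ)) j) = (A ^ (k+1) *ᵥ fun _ => (1:ℝ)) i := by
      rw [pow_succ']
      rw [← Matrix.mulVec_mulVec]
      simp [Matrix.mulVec, dotProduct]
    rw [h1, h2, hu]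
    have hθne : θ ≠ 0 := hθ0.ne'
    field_simp [pow_succ]
    have hθθ : θ * (1 / θ) = 1 := by rw [mul_one_div_cancel hθne]
    linear_combination (-((1 / θ) ^ k * (A ^ (k + 1) *ᵥ fun _ => (1:ℝ)) i)) * hθθ
  have h3 : (A *ᵥ v) i = ∑' k, θ * u (k+1) i := by
    have h4 : (A *ᵥ v) i = ∑ j, A i j * v j := by simp [Matrix.mulVec, dotProduct]
    rw [h4]
    have h5 : ∀ j, A i j * v j = ∑' k, A i j * u k j := fun j => (tsum_mul_left).symm
    simp_rw [h5]
    rw [← Summable.tsum_finsetSum (fun j _ => (hsum j).mul_left _)]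
    exact tsum_congr fun k => hshift k i
  have h6 : Summable fun k => u (k+1) i := by
    have := (hsum i).comp_injective (add_left_injective 1)
    exact this
  rw [h3, tsum_mul_left]
  have h7 : ∑' k, u (k+1) i = v i - u 0 i := by
    have := Summable.tsum_eq_zero_add (hsum i)
    rw [hv]; linarith [this]
  rw [h7]
  have h8 : u 0 i = 1 := by simp [hu, hAk1, Matrix.one_apply]
  rw [h8]
  have := hv1 i
  nlinarith

private lemma abs_min_sub_min' (a b c : ℝ) : |min a c - min b c| ≤ |a - b| := by
  have h1 := le_abs_self (a - b); have h2 := neg_abs_le (a - b)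
  rcases le_total a c with h | h <;> rcases le_total b c with h' | h' <;>
    rw [abs_sub_le_iff] <;> constructor <;>
    simp [min_eq_left, min_eq_right, h, h'] <;> linarith

private lemma abs_max_sub_max' (a b c : ℝ) : |max a c - max b c| ≤ |a - b| := by
  have h1 := le_abs_self (a - b); have h2 := neg_abs_le (a - b)
  rcases le_total a c with h | h <;> rcases le_total b c with h' | h' <;>
    rw [abs_sub_le_iff] <;> constructor <;>
    simp [max_eq_left, max_eq_right, h, h'] <;> linarith

private lemma clamp_lip {ι : Type*} (m a b : ι → ℝ) (k : ι) :
    |clamp m a k - clamp m b k| ≤ |a k - b k| :=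
  (abs_min_sub_min' _ _ _).trans (abs_max_sub_max' _ _ _)

/-- the fundamental componentwise estimate -/
private lemma F_estimate {n : ℕ} (W : Matrix (Fin n) (Fin n) ℝ) (m c a b : Fin n → ℝ)
    (k : Fin n) :
    |clamp m (W *ᵥ a + c) k - clamp m (W *ᵥ b + c) k| ≤ ∑ j, eAbs W k j * |a j - b j| := by
  refine (clamp_lip m _ _ k).trans ?_
  have h1 : (W *ᵥ a + c) k - (W *ᵥ b + c) k = ∑ j, W k j * (a j - b j) := by
    simp [Matrix.mulVec, dotProduct, ← Finset.sum_sub_distrib, mul_sub]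
  rw [h1]
  refine (Finset.abs_sum_le_sum_abs _ _).trans ?_
  refine Finset.sum_le_sum fun j _ => ?_
  rw [abs_mul, eAbs]
  simp

end Aux

/-- If `ρ(|W|) < 1` then for every constant input `c` the equation `x = [W x + c]_0^m` has a
unique solution `x*(c)` and the linear-threshold dynamics `τ ẋ = −x + [W x + c]_0^m` is
globally exponentially stable to `x*(c)`. -/
theorem linear_threshold_GES_of_specRad_lt_one {n : ℕ}
    (W : Matrix (Fin n) (Fin n) ℝ) (m : Fin n → ℝ) (hm : ∀ k, 0 < m k)
    (τ : ℝ) (hτ : 0 < τ)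
    (hρ : specRad (eAbs W) < 1) :
    ∀ c : Fin n → ℝ, ∃ xstar : Fin n → ℝ,
      (xstar = clamp m (W *ᵥ xstar + c) ∧
        ∀ y : Fin n → ℝ, y = clamp m (W *ᵥ y + c) → y = xstar) ∧
      ∃ C ≥ (1:ℝ), ∃ lam > (0:ℝ), ∀ x : ℝ → Fin n → ℝ,
        (∀ t, HasDerivAt x (τ⁻¹ • (-x t + clamp m (W *ᵥ x t + c))) t) →
        ∀ t ≥ (0:ℝ), ‖x t - xstar‖ ≤ C * ‖x 0 - xstar‖ * Real.exp (-lam * t) := by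
  intro c
  obtain ⟨θ, hθ0, hθ1, v, M, hv1, hvM, hAv⟩ :=
    exists_weight (eAbs W) (fun i j => abs_nonneg _) hρ
  set F : (Fin n → ℝ) → (Fin n → ℝ) := fun x => clamp m (W *ᵥ x + c) with hF
  have hv0 : ∀ k, 0 < v k := fun k => lt_of_lt_of_le one_pos (hv1 k)
  -- the key contraction estimate in the weighted norm
  have key : ∀ (a b : Fin n → ℝ) (r : ℝ), 0 ≤ r → (∀ j, |a j - b j| ≤ r * v j) →
      ∀ k, |F a k - F b k| ≤ θ * r * v k := by
    intro a b r hr hab k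
    refine (F_estimate W m c a b k).trans ?_
    have h1 : ∑ j, eAbs W k j * |a j - b j| ≤ ∑ j, eAbs W k j * (r * v j) :=
      Finset.sum_le_sum fun j _ => mul_le_mul_of_nonneg_left (hab j) (abs_nonneg _)
    have h2 : ∑ j, eAbs W k j * (r * v j) = r * (eAbs W *ᵥ v) k := by
      simp only [Matrix.mulVec, dotProduct, Finset.mul_sum]
      congr 1; ext j; ring
    calc ∑ j, eAbs W k j * |a j - b j| ≤ r * (eAbs W *ᵥ v) k := by rw [← h2]; exact h1
      _ ≤ r * (θ * v k) := mul_le_mul_of_nonneg_left (hAv k) hr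
      _ = θ * r * v k := by ring
  -- the rescaled map is a contraction in the sup norm
  set G : (Fin n → ℝ) → (Fin n → ℝ) := fun y k => F (fun j => v j * y j) k / v k with hG
  have hGkey : ∀ (y z : Fin n → ℝ) (k : Fin n), |G y k - G z k| ≤ θ * dist y z := by
    intro y z k
    have hab : ∀ j, |v j * y j - v j * z j| ≤ dist y z * v j := by
      intro j
      have h1 : |v j * y j - v j * z j| = v j * |y j - z j| := by
        rw [← mul_sub, abs_mul, abs_of_pos (hv0 j)]
      rw [h1, mul_comm]
      refine mul_le_mul_of_nonneg_right ?_ (hv0 j).le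
      rw [← Real.dist_eq]; exact dist_le_pi_dist y z j
    have hk := key (fun j => v j * y j) (fun j => v j * z j) (dist y z) dist_nonneg hab k
    have h2 : G y k - G z k =
        (F (fun j => v j * y j) k - F (fun j => v j * z j) k) / v k := by
      simp only [hG]; ring
    rw [h2, abs_div, abs_of_pos (hv0 k), div_le_iff₀ (hv0 k)]
    calc |F (fun j => v j * y j) k - F (fun j => v j * z j) k| ≤ θ * dist y z * v k := hk
      _ = θ * dist y z * v k := rfl
  have hGlip : LipschitzWith ⟨θ, hθ0.le⟩ G := by
    refine LipschitzWith.of_dist_le_mul fun y z => ?_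
    have hnn : (0:ℝ) ≤ θ * dist y z := mul_nonneg hθ0.le dist_nonneg
    show dist (G y) (G z) ≤ θ * dist y z
    rw [dist_pi_le_iff hnn]
    intro k
    rw [Real.dist_eq]
    exact hGkey y z k
  have hcw : ContractingWith ⟨θ, hθ0.le⟩ G := ⟨by exact_mod_cast hθ1, hGlip⟩
  set yf : Fin n → ℝ := ContractingWith.fixedPoint G hcw with hyfdef
  have hyf : G yf = yf := hcw.fixedPoint_isFixedPt
  set xstar : Fin n → ℝ := fun k => v k * yf k with hxstar
  have hvyf : (fun j => v j * yf j) = xstar := rfl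
  have hfix : xstar = F xstar := by
    funext k
    have h1 : G yf k = yf k := congrFun hyf k
    have h2 : F xstar k / v k = yf k := by rw [← h1]
    calc xstar k = v k * yf k := rfl
      _ = v k * (F xstar k / v k) := by rw [h2]
      _ = F xstar k := by rw [mul_div_assoc']; exact mul_div_cancel_left₀ _ (hv0 k).ne'
  have huniq : ∀ y : Fin n → ℝ, y = F y → y = xstar := by
    intro y hy
    set z : Fin n → ℝ := fun k => y k / v k with hz
    have hvz : (fun j => v j * z j) = y := by
      funext j; rw [hz]; rw [mul_comm, div_mul_cancel₀ _ (hv0 j).ne']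
    have hGz : G z = z := by
      funext k
      show F (fun j => v j * z j) k / v k = z k
      rw [hvz, ← hy]
    have hzy : z = yf := hcw.fixedPoint_unique hGz
    funext k
    have : y k = v k * z k := by
      show y k = v k * (y k / v k)
      rw [mul_div_assoc']
      exact (mul_div_cancel_left₀ _ (hv0 k).ne').symm
    rw [this, hzy]
  refine ⟨xstar, ⟨hfix, huniq⟩, max M 1, le_max_right _ _, (1 - θ) / τ,
    div_pos (by linarith) hτ, ?_⟩
  intro x hx t ht
  set lam : ℝ := (1 - θ) / τ with hlam
  -- the rescaled error function
  set ψ : ℝ → Fin n → ℝ := fun t k => Real.exp (t / τ) * (x t k - xstar k) / v k with hψ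
  set ψd : ℝ → Fin n → ℝ :=
    fun t k => Real.exp (t / τ) * (F (x t) k - xstar k) / (τ * v k) with hψd
  have hderiv : ∀ s, HasDerivAt ψ (ψd s) s := by
    intro s
    refine hasDerivAt_pi.2 fun k => ?_
    have hxk : HasDerivAt (fun w => x w k) (τ⁻¹ * (-(x s k) + F (x s) k)) s := by
      have := hasDerivAt_pi.1 (hx s) k
      simpa [hF] using this
    have hexp : HasDerivAt (fun w : ℝ => Real.exp (w / τ)) (Real.exp (s / τ) * (1 / τ)) s :=
      ((hasDerivAt_id s).div_const τ).exp
    have hprod := (hexp.mul (hxk.sub_const (xstar k))).div_const (v k)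
    have heq : (Real.exp (s / τ) * (1 / τ) * (x s k - xstar k) +
        Real.exp (s / τ) * (τ⁻¹ * (-(x s k) + F (x s) k))) / v k = ψd s k := by
      rw [hψd]
      field_simp
      ring
    rw [heq] at hprod
    exact hprod
  have hcont : Continuous ψ :=
    continuous_iff_continuousAt.2 fun s => (hderiv s).continuousAt
  have hbound : ∀ s, ‖ψd s‖ ≤ θ / τ * ‖ψ s‖ := by
    intro s
    have hnn : (0:ℝ) ≤ θ / τ * ‖ψ s‖ :=
      mul_nonneg (div_nonneg hθ0.le hτ.le) (norm_nonneg _)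
    rw [pi_norm_le_iff_of_nonneg hnn]
    intro k
    set r : ℝ := ‖ψ s‖ * Real.exp (-(s / τ)) with hrr
    have hr0 : 0 ≤ r := mul_nonneg (norm_nonneg _) (Real.exp_nonneg _)
    have hab : ∀ j, |x s j - xstar j| ≤ r * v j := by
      intro j
      have h1 : |ψ s j| ≤ ‖ψ s‖ := by
        rw [← Real.norm_eq_abs]; exact norm_le_pi_norm (ψ s) j
      have h2 : |ψ s j| = Real.exp (s / τ) * |x s j - xstar j| / v j := by
        rw [hψ, abs_div, abs_mul, abs_of_pos (Real.exp_pos _), abs_of_pos (hv0 j)]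
      rw [h2] at h1
      rw [div_le_iff₀ (hv0 j)] at h1
      have h3 : |x s j - xstar j| =
          Real.exp (-(s / τ)) * (Real.exp (s / τ) * |x s j - xstar j|) := by
        rw [← mul_assoc, ← Real.exp_add]
        simp
      rw [h3, hrr]
      calc Real.exp (-(s / τ)) * (Real.exp (s / τ) * |x s j - xstar j|)
          ≤ Real.exp (-(s / τ)) * (‖ψ s‖ * v j) :=
            mul_le_mul_of_nonneg_left h1 (Real.exp_nonneg _)
        _ = ‖ψ s‖ * Real.exp (-(s / τ)) * v j := by ring
    have hkey := key (x s) xstar r hr0 hab k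
    rw [← hfix] at hkey
    have h4 : ‖ψd s k‖ = Real.exp (s / τ) * |F (x s) k - xstar k| / (τ * v k) := by
      rw [Real.norm_eq_abs, hψd, abs_div, abs_mul, abs_of_pos (Real.exp_pos _),
        abs_of_pos (mul_pos hτ (hv0 k))]
    rw [h4]
    rw [div_le_iff₀ (mul_pos hτ (hv0 k))]
    calc Real.exp (s / τ) * |F (x s) k - xstar k|
        ≤ Real.exp (s / τ) * (θ * r * v k) :=
          mul_le_mul_of_nonneg_left hkey (Real.exp_nonneg _)
      _ = θ / τ * ‖ψ s‖ * (τ * v k) := by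
          rw [hrr]
          have hE : Real.exp (s / τ) * Real.exp (-(s / τ)) = 1 := by
            rw [← Real.exp_add]; simp
          have h9 : Real.exp (s / τ) * (θ * (‖ψ s‖ * Real.exp (-(s / τ))) * v k) =
              Real.exp (s / τ) * Real.exp (-(s / τ)) * (θ * ‖ψ s‖ * v k) := by ring
          rw [h9, hE, one_mul]
          field_simp
  -- Gronwall
  have hgron : ‖ψ t‖ ≤ ‖ψ 0‖ * Real.exp (θ / τ * t) := by
    have h := norm_le_gronwallBound_of_norm_deriv_right_le (f := ψ) (f' := ψd)
      (δ := ‖ψ 0‖) (K := θ / τ) (ε := 0) (a := 0) (b := t)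
      (hcont.continuousOn)
      (fun s _ => (hderiv s).hasDerivWithinAt)
      le_rfl
      (fun s _ => by rw [add_zero]; exact hbound s)
      t (Set.mem_Icc.mpr ⟨ht, le_refl t⟩)
    rwa [gronwallBound_ε0, sub_zero] at h
  -- conclude
  have hψ0 : ‖ψ 0‖ ≤ ‖x 0 - xstar‖ := by
    rw [pi_norm_le_iff_of_nonneg (norm_nonneg _)]
    intro k
    have h1 : ‖ψ 0 k‖ = |x 0 k - xstar k| / v k := by
      rw [Real.norm_eq_abs, hψ]
      simp [abs_div, abs_of_pos (hv0 k)]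
    rw [h1]
    calc |x 0 k - xstar k| / v k ≤ |x 0 k - xstar k| :=
          div_le_self (abs_nonneg _) (hv1 k)
      _ ≤ ‖x 0 - xstar‖ := by
          rw [← Real.norm_eq_abs]
          have := norm_le_pi_norm (x 0 - xstar) k
          simpa using this
  have hM1 : (0:ℝ) < max M 1 := lt_of_lt_of_le one_pos (le_max_right _ _)
  rw [pi_norm_le_iff_of_nonneg (by positivity)]
  intro k
  have h1 : ‖(x t - xstar) k‖ = v k * |ψ t k| * Real.exp (-(t / τ)) := by
    have h2 : |ψ t k| = Real.exp (t / τ) * |x t k - xstar k| / v k := by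
      rw [hψ, abs_div, abs_mul, abs_of_pos (Real.exp_pos _), abs_of_pos (hv0 k)]
    rw [Real.norm_eq_abs, Pi.sub_apply, h2]
    have hE : Real.exp (t / τ) * Real.exp (-(t / τ)) = 1 := by rw [← Real.exp_add]; simp
    have h9 : v k * (Real.exp (t / τ) * |x t k - xstar k| / v k) * Real.exp (-(t / τ)) =
        v k / v k * (Real.exp (t / τ) * Real.exp (-(t / τ)) * |x t k - xstar k|) := by ring
    rw [h9, div_self (hv0 k).ne', hE, one_mul, one_mul]
  rw [h1]
  have h3 : |ψ t k| ≤ ‖ψ 0‖ * Real.exp (θ / τ * t) := by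
    refine le_trans ?_ hgron
    rw [← Real.norm_eq_abs]; exact norm_le_pi_norm (ψ t) k
  have h5 : v k * |ψ t k| * Real.exp (-(t / τ)) ≤
      max M 1 * (‖ψ 0‖ * Real.exp (θ / τ * t)) * Real.exp (-(t / τ)) := by
    have hvk : v k ≤ max M 1 := le_trans (hvM k) (le_max_left _ _)
    have := mul_le_mul (mul_le_mul hvk h3 (abs_nonneg _) hM1.le)
      (le_refl (Real.exp (-(t / τ)))) (Real.exp_nonneg _)
      (mul_nonneg hM1.le (mul_nonneg (norm_nonneg _) (Real.exp_nonneg _)))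
    exact this
  refine h5.trans ?_
  have h6 : Real.exp (θ / τ * t) * Real.exp (-(t / τ)) = Real.exp (-lam * t) := by
    rw [← Real.exp_add, hlam]
    congr 1
    field_simp
    ring
  calc max M 1 * (‖ψ 0‖ * Real.exp (θ / τ * t)) * Real.exp (-(t / τ))
      = max M 1 * ‖ψ 0‖ * Real.exp (-lam * t) := by rw [← h6]; ring
    _ ≤ max M 1 * ‖x 0 - xstar‖ * Real.exp (-lam * t) := by
        refine mul_le_mul_of_nonneg_right ?_ (Real.exp_nonneg _)
        exact mul_le_mul_of_nonneg_left hψ0 hM1.le
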